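/- Let k ≥ 1 and suppose ξ ∈ ℝ^{2n} is orthogonal to V_{k−1}. Then the function t ↦ ξ·D_t ξ has vanishing derivatives of all orders j ≤ 2k at t = 0, and its (2k+1)-st derivative at t = 0 equals binom(2k,k) · ξ^T F^k M (F^T)^k ξ. -/

import Mathlib

open Matrix MeasureTheory intervalIntegral


attribute [local instance] Matrix.linftyOpNormedAddCommGroup Matrix.linftyOpNormedRing
  Matrix.linftyOpNormedAlgebra

namespace QFTaux

variable {m : Type*} [Fintype m] [DecidableEq m]

noncomputable def E (A : Matrix m m ℝ) (t : ℝ) : Matrix m m ℝ := NormedSpace.exp (t • A)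

lemma hasDerivAt_E (A : Matrix m m ℝ) (t : ℝ) : HasDerivAt (E A) (E A t * A) t :=
  hasDerivAt_exp_smul_const A t

noncomputable def entryCLM (i j : m) : Matrix m m ℝ →L[ℝ] ℝ :=
  LinearMap.toContinuousLinearMap
    { toFun := fun X => X i j, map_add' := fun _ _ => rfl, map_smul' := fun _ _ => rfl }

lemma hasDerivAt_entry (A : Matrix m m ℝ) (t : ℝ) (i j : m) :
    HasDerivAt (fun s => E A s i j) ((E A t * A) i j) t :=
  (entryCLM i j).hasFDerivAt.comp_hasDerivAt t (hasDerivAt_E A t)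

lemma continuous_entry (A : Matrix m m ℝ) (i j : m) :
    Continuous fun s => E A s i j :=
  ((hasDerivAt_entry A · i j) : ∀ t, _) |> fun h => continuous_iff_continuousAt.2 fun t => (h t).continuousAt

noncomputable def u (A : Matrix m m ℝ) (ξ : m → ℝ) (t : ℝ) : m → ℝ := vecMul ξ (E A t)

def q (C : Matrix m m ℝ) (v : m → ℝ) : ℝ := v ⬝ᵥ C.mulVec v

lemma hasDerivAt_u (A : Matrix m m ℝ) (ξ : m → ℝ) (t : ℝ) (a : m) :
    HasDerivAt (fun s => u A ξ s a) (vecMul ξ (E A t * A) a) t := by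
  have : ∀ s, u A ξ s a = ∑ i, ξ i * E A s i a := by
    intro s; simp [u, vecMul, dotProduct]
  simp only [this]
  have : vecMul ξ (E A t * A) a = ∑ i, ξ i * (E A t * A) i a := by
    simp [vecMul, dotProduct]
  rw [this]
  exact HasDerivAt.fun_sum fun i _ => (hasDerivAt_entry A t i a).const_mul (ξ i)

lemma q_sum (C : Matrix m m ℝ) (v : m → ℝ) :
    q C v = ∑ a, v a * ∑ b, C a b * v b := by
  simp [q, dotProduct, mulVec]

lemma continuous_qu (A C : Matrix m m ℝ) (ξ : m → ℝ) :
    Continuous fun s => q C (u A ξ s) := by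
  have hu : ∀ a, Continuous fun s => u A ξ s a := by
    intro a
    exact continuous_iff_continuousAt.2 fun t => (hasDerivAt_u A ξ t a).continuousAt
  simp only [q_sum]
  exact continuous_finset_sum _ fun a _ =>
    (hu a).mul (continuous_finset_sum _ fun b _ => (continuous_const.mul (hu b)))

lemma dot_helper (A C : Matrix m m ℝ) (ξ : m → ℝ) (t : ℝ) :
    (vecMul ξ (E A t * A)) ⬝ᵥ C.mulVec (u A ξ t) + (u A ξ t) ⬝ᵥ C.mulVec (vecMul ξ (E A t * A)) =
      q (A * C + C * Aᵀ) (u A ξ t) := by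
  have h1 : vecMul ξ (E A t * A) = vecMul (u A ξ t) A := by
    simp [u, vecMul_vecMul]
  rw [h1, q]
  rw [show (vecMul (u A ξ t) A) ⬝ᵥ C.mulVec (u A ξ t)
      = u A ξ t ⬝ᵥ (A * C).mulVec (u A ξ t) by
    rw [← dotProduct_mulVec, mulVec_mulVec]]
  rw [show C.mulVec (vecMul (u A ξ t) A) = (C * Aᵀ).mulVec (u A ξ t) by
    rw [← mulVec_transpose, mulVec_mulVec]]
  rw [add_mulVec, dotProduct_add]

lemma hasDerivAt_qu (A C : Matrix m m ℝ) (ξ : m → ℝ) (t : ℝ) :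
    HasDerivAt (fun s => q C (u A ξ s)) (q (A * C + C * Aᵀ) (u A ξ t)) t := by
  have key : HasDerivAt (fun s => ∑ a, u A ξ s a * ∑ b, C a b * u A ξ s b)
      ((vecMul ξ (E A t * A)) ⬝ᵥ C.mulVec (u A ξ t)
        + (u A ξ t) ⬝ᵥ C.mulVec (vecMul ξ (E A t * A))) t := by
    have h : ∀ a : m, HasDerivAt (fun s => u A ξ s a * ∑ b, C a b * u A ξ s b)
        (vecMul ξ (E A t * A) a * ∑ b, C a b * u A ξ t b
          + u A ξ t a * ∑ b, C a b * vecMul ξ (E A t * A) b) t := fun a =>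
      (hasDerivAt_u A ξ t a).mul
        (HasDerivAt.fun_sum fun b _ => (hasDerivAt_u A ξ t b).const_mul (C a b))
    have := HasDerivAt.fun_sum (fun a (_ : a ∈ Finset.univ) => h a)
    refine this.congr_deriv (Eq.symm ?_)
    rw [Finset.sum_add_distrib]
    congr 1 <;> simp [dotProduct, mulVec, Finset.mul_sum]
  rw [← dot_helper A C ξ t]
  simpa only [q_sum] using key

noncomputable def Lop (A : Matrix m m ℝ) : Module.End ℝ (Matrix m m ℝ) :=
  LinearMap.mulLeft ℝ A + LinearMap.mulRight ℝ Aᵀ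

lemma iteratedDeriv_qu (A : Matrix m m ℝ) (ξ : m → ℝ) (p : ℕ) (C : Matrix m m ℝ) :
    iteratedDeriv p (fun s => q C (u A ξ s)) = fun s => q ((Lop A ^ p) C) (u A ξ s) := by
  induction p generalizing C with
  | zero => simp [iteratedDeriv_zero]
  | succ p ih =>
    rw [iteratedDeriv_succ']
    have hd : deriv (fun s => q C (u A ξ s)) = fun s => q (Lop A C) (u A ξ s) := by
      funext s
      simpa [Lop] using (hasDerivAt_qu A C ξ s).deriv
    rw [hd, ih (Lop A C)]
    funext s
    congr 1

lemma Lop_pow_apply (A : Matrix m m ℝ) (C : Matrix m m ℝ) (p : ℕ) :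
    (Lop A ^ p) C = ∑ i ∈ Finset.range (p + 1), p.choose i • (A ^ i * C * Aᵀ ^ (p - i)) := by
  have hc : Commute (LinearMap.mulLeft ℝ A) (LinearMap.mulRight ℝ Aᵀ) :=
    LinearMap.commute_mulLeft_right A Aᵀ
  rw [Lop, hc.add_pow]
  rw [LinearMap.sum_apply]
  refine Finset.sum_congr rfl fun i _ => ?_
  rw [Module.End.mul_apply, Module.End.mul_apply, Module.End.natCast_apply,
    LinearMap.pow_mulLeft, LinearMap.pow_mulRight, LinearMap.mulRight_apply,
    LinearMap.mulLeft_apply]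
  rw [smul_mul_assoc, mul_smul_comm, mul_assoc]

lemma u_zero (A : Matrix m m ℝ) (ξ : m → ℝ) : u A ξ 0 = ξ := by
  simp [u, E]


lemma dot_sum_mulVec {ι : Type*} (s : Finset ι) (f : ι → Matrix m m ℝ) (x y : m → ℝ) :
    x ⬝ᵥ (∑ i ∈ s, f i).mulVec y = ∑ i ∈ s, x ⬝ᵥ (f i).mulVec y := by
  classical
  induction s using Finset.induction with
  | empty => simp [mulVec, dotProduct]
  | insert _ _ hi ih =>
    rw [Finset.sum_insert hi, Finset.sum_insert hi, add_mulVec, dotProduct_add, ih]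

lemma vecMul_sum' {ι : Type*} (s : Finset ι) (f : ι → Matrix m m ℝ) (x : m → ℝ) :
    vecMul x (∑ i ∈ s, f i) = ∑ i ∈ s, vecMul x (f i) := by
  classical
  induction s using Finset.induction with
  | empty => simp [vecMul, dotProduct]
  | insert _ _ hi ih => rw [Finset.sum_insert hi, Finset.sum_insert hi, vecMul_add, ih]

lemma quad_form_eq (X Y C : Matrix m m ℝ) (x : m → ℝ) :
    x ⬝ᵥ (X * C * Yᵀ).mulVec x = (vecMul x X) ⬝ᵥ C.mulVec (vecMul x Y) := by
  rw [← mulVec_mulVec, ← mulVec_mulVec, mulVec_transpose, dotProduct_mulVec]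

lemma q_u_eq (A C : Matrix m m ℝ) (ξ : m → ℝ) (s : ℝ) :
    q C (u A ξ s) = ξ ⬝ᵥ (E A s * C * (E A s)ᵀ).mulVec ξ := by
  rw [quad_form_eq, q, u]

lemma vecMul_vecMulVec (x a b : m → ℝ) : vecMul x (vecMulVec a b) = (x ⬝ᵥ a) • b := by
  funext j
  simp [vecMul, dotProduct, vecMulVec, Finset.sum_mul, mul_assoc]

lemma continuous_quad_entry (A C : Matrix m m ℝ) (i j : m) :
    Continuous fun s => (E A s * C * (E A s)ᵀ) i j := by
  have : ∀ s, (E A s * C * (E A s)ᵀ) i j = ∑ c, (∑ a, E A s i a * C a c) * E A s j c := by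
    intro s; simp [Matrix.mul_apply, Matrix.transpose_apply]
  simp only [this]
  exact continuous_finset_sum _ fun c _ =>
    ((continuous_finset_sum _ fun a _ => (continuous_entry A i a).mul continuous_const).mul
      (continuous_entry A j c))

end QFTaux

set_option maxHeartbeats 1000000 in
/-- if `ξ ⊥ V_{k-1}` (k ≥ 1), the function `t ↦ ξ·D_t ξ` has vanishing
derivatives of all orders `j ≤ 2k` at `t = 0`, and its `(2k+1)`-st derivative at
`t = 0` equals `C(2k,k) ξᵀ Fᵏ M (Fᵀ)ᵏ ξ`. -/
theorem quadratic_form_taylor_vanishing (n K : ℕ) (hn : 1 ≤ n)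
    (Ω : Matrix (Fin n ⊕ Fin n) (Fin n ⊕ Fin n) ℝ)
    (hΩ : Ω = Matrix.fromBlocks 0 (-1) 1 0)
    (Q : Matrix (Fin n ⊕ Fin n) (Fin n ⊕ Fin n) ℝ) (hQ : Q.IsSymm)
    (F : Matrix (Fin n ⊕ Fin n) (Fin n ⊕ Fin n) ℝ) (hF : F = Ω * Q)
    (l : Fin K → (Fin n ⊕ Fin n) → ℂ)
    (M : Matrix (Fin n ⊕ Fin n) (Fin n ⊕ Fin n) ℝ)
    (hM : M = ∑ k, (vecMulVec (fun i => (l k i).re) (fun i => (l k i).re)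
                  + vecMulVec (fun i => (l k i).im) (fun i => (l k i).im)))
    (N : Matrix (Fin n ⊕ Fin n) (Fin n ⊕ Fin n) ℝ)
    (hN : N = ∑ k, (vecMulVec (fun i => (l k i).re) (fun i => (l k i).im)
                  - vecMulVec (fun i => (l k i).im) (fun i => (l k i).re)))
    (A : Matrix (Fin n ⊕ Fin n) (Fin n ⊕ Fin n) ℝ) (hA : A = F + N * Ω)
    (V₀ : Submodule ℝ ((Fin n ⊕ Fin n) → ℝ))
    (hV₀ : V₀ = Submodule.span ℝ
      (Set.range (fun k => fun i => (l k i).re) ∪ Set.range (fun k => fun i => (l k i).im)))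
    (V : ℕ → Submodule ℝ ((Fin n ⊕ Fin n) → ℝ))
    (hV : ∀ j : ℕ, V j = ⨆ m ∈ Finset.range (j + 1), Submodule.map (F ^ m).mulVecLin V₀)
    (R : ℝ → Matrix (Fin n ⊕ Fin n) (Fin n ⊕ Fin n) ℝ)
    (hR : ∀ t, R t = NormedSpace.exp (t • A))
    (D : ℝ → Matrix (Fin n ⊕ Fin n) (Fin n ⊕ Fin n) ℝ)
    (hD : ∀ t, D t = Matrix.of fun i j => ∫ s in (0:ℝ)..t, (R s * M * (R s)ᵀ) i j)
    (k : ℕ) (hk : 1 ≤ k)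
    (ξ : (Fin n ⊕ Fin n) → ℝ) (hξ : ∀ v ∈ V (k - 1), ξ ⬝ᵥ v = 0) :
    (∀ j : ℕ, j ≤ 2 * k →
      iteratedDeriv j (fun t => ξ ⬝ᵥ (D t).mulVec ξ) 0 = 0) ∧
    iteratedDeriv (2 * k + 1) (fun t => ξ ⬝ᵥ (D t).mulVec ξ) 0 =
      ((2 * k).choose k : ℝ) * (ξ ⬝ᵥ (F ^ k * M * (Fᵀ) ^ k).mulVec ξ) := by
  have hRE : ∀ s, R s = QFTaux.E A s := fun s => hR s
  -- Step A : the quadratic form as an integral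
  have hfi : ∀ t, ξ ⬝ᵥ (D t).mulVec ξ =
      ∫ s in (0:ℝ)..t, QFTaux.q M (QFTaux.u A ξ s) := by
    intro t
    have hcont : ∀ (i j : Fin n ⊕ Fin n),
        Continuous fun s => ξ i * ((R s * M * (R s)ᵀ) i j * ξ j) := by
      intro i j
      simp only [hRE]
      exact continuous_const.mul ((QFTaux.continuous_quad_entry A M i j).mul continuous_const)
    have hint : ∀ (i j : Fin n ⊕ Fin n), IntervalIntegrable
        (fun s => ξ i * ((R s * M * (R s)ᵀ) i j * ξ j)) volume 0 t :=
      fun i j => (hcont i j).intervalIntegrable 0 t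
    calc ξ ⬝ᵥ (D t).mulVec ξ
        = ∑ i, ∑ j, ξ i * ((∫ s in (0:ℝ)..t, (R s * M * (R s)ᵀ) i j) * ξ j) := by
          simp only [hD t, dotProduct, mulVec, Matrix.of_apply, Finset.mul_sum]
      _ = ∑ i, ∑ j, ∫ s in (0:ℝ)..t, ξ i * ((R s * M * (R s)ᵀ) i j * ξ j) := by
          refine Finset.sum_congr rfl fun i _ => Finset.sum_congr rfl fun j _ => ?_
          rw [← intervalIntegral.integral_mul_const, ← intervalIntegral.integral_const_mul]
      _ = ∫ s in (0:ℝ)..t, ∑ i, ∑ j, ξ i * ((R s * M * (R s)ᵀ) i j * ξ j) := by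
          have h1 : ∀ i : Fin n ⊕ Fin n,
              (∫ s in (0:ℝ)..t, ∑ j, ξ i * ((R s * M * (R s)ᵀ) i j * ξ j))
                = ∑ j, ∫ s in (0:ℝ)..t, ξ i * ((R s * M * (R s)ᵀ) i j * ξ j) := fun i =>
            intervalIntegral.integral_finset_sum fun j _ => hint i j
          have h2 : (∫ s in (0:ℝ)..t, ∑ i, ∑ j, ξ i * ((R s * M * (R s)ᵀ) i j * ξ j))
              = ∑ i, ∫ s in (0:ℝ)..t, ∑ j, ξ i * ((R s * M * (R s)ᵀ) i j * ξ j) :=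
            intervalIntegral.integral_finset_sum fun i _ =>
              (continuous_finset_sum _ fun j _ => hcont i j).intervalIntegrable 0 t
          rw [h2]
          exact Finset.sum_congr rfl fun i _ => (h1 i).symm
      _ = ∫ s in (0:ℝ)..t, QFTaux.q M (QFTaux.u A ξ s) := by
          refine intervalIntegral.integral_congr fun s _ => ?_
          rw [QFTaux.q_u_eq, ← hRE]
          simp only [dotProduct, mulVec, Finset.mul_sum]
  have hfg : (fun t => ξ ⬝ᵥ (D t).mulVec ξ)
      = fun t => ∫ s in (0:ℝ)..t, QFTaux.q M (QFTaux.u A ξ s) := funext hfi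
  -- Step B : derivative of the integral
  have hderiv : deriv (fun t => ∫ s in (0:ℝ)..t, QFTaux.q M (QFTaux.u A ξ s))
      = fun s => QFTaux.q M (QFTaux.u A ξ s) :=
    funext fun t => Continuous.deriv_integral _ (QFTaux.continuous_qu A M ξ) 0 t
  -- Step C : iterated derivatives
  have hiter : ∀ p : ℕ,
      iteratedDeriv (p + 1) (fun t => ξ ⬝ᵥ (D t).mulVec ξ) 0 =
        ∑ i ∈ Finset.range (p + 1),
          p.choose i • (ξ ⬝ᵥ (A ^ i * M * (Aᵀ) ^ (p - i)).mulVec ξ) := by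
    intro p
    have hqu := congrFun (QFTaux.iteratedDeriv_qu A ξ p M) 0
    rw [hfg, iteratedDeriv_succ', hderiv, hqu]
    rw [QFTaux.u_zero, QFTaux.Lop_pow_apply]
    rw [QFTaux.q]
    rw [QFTaux.dot_sum_mulVec]
    refine Finset.sum_congr rfl fun i _ => ?_
    rw [Matrix.smul_mulVec, dotProduct_smul]

  -- orthogonality facts
  have hmem0 : ∀ κ : Fin K, (fun i => (l κ i).re) ∈ V₀ ∧ (fun i => (l κ i).im) ∈ V₀ := by
    intro κ
    constructor
    · rw [hV₀]; exact Submodule.subset_span (Or.inl ⟨κ, rfl⟩)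
    · rw [hV₀]; exact Submodule.subset_span (Or.inr ⟨κ, rfl⟩)
  have h0 : ∀ i : ℕ, i ≤ k - 1 → ∀ v ∈ V₀, ξ ⬝ᵥ (F ^ i).mulVec v = 0 := by
    intro i hi v hv
    have hle : Submodule.map (F ^ i).mulVecLin V₀ ≤
        ⨆ m ∈ Finset.range (k - 1 + 1), Submodule.map (F ^ m).mulVecLin V₀ :=
      le_biSup (fun m => Submodule.map (F ^ m).mulVecLin V₀)
        (Finset.mem_range.2 (by omega : i < k - 1 + 1))
    exact hξ _ (by rw [hV]; exact hle ⟨v, hv, rfl⟩)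
  have hdotF : ∀ i : ℕ, i ≤ k - 1 → ∀ κ : Fin K,
      (vecMul ξ (F ^ i)) ⬝ᵥ (fun a => (l κ a).re) = 0 ∧
      (vecMul ξ (F ^ i)) ⬝ᵥ (fun a => (l κ a).im) = 0 := by
    intro i hi κ
    constructor
    · rw [← dotProduct_mulVec]; exact h0 i hi _ (hmem0 κ).1
    · rw [← dotProduct_mulVec]; exact h0 i hi _ (hmem0 κ).2
  have hFM : ∀ i : ℕ, i ≤ k - 1 → vecMul (vecMul ξ (F ^ i)) M = 0 := by
    intro i hi
    rw [hM, QFTaux.vecMul_sum']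
    refine Finset.sum_eq_zero fun κ _ => ?_
    rw [vecMul_add, QFTaux.vecMul_vecMulVec, QFTaux.vecMul_vecMulVec,
      (hdotF i hi κ).1, (hdotF i hi κ).2]
    simp
  have hFN : ∀ i : ℕ, i ≤ k - 1 → vecMul (vecMul ξ (F ^ i)) N = 0 := by
    intro i hi
    rw [hN, QFTaux.vecMul_sum']
    refine Finset.sum_eq_zero fun κ _ => ?_
    rw [vecMul_sub, QFTaux.vecMul_vecMulVec, QFTaux.vecMul_vecMulVec,
      (hdotF i hi κ).1, (hdotF i hi κ).2]
    simp
  have hAF : ∀ i : ℕ, i ≤ k → vecMul ξ (A ^ i) = vecMul ξ (F ^ i) := by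
    intro i
    induction i with
    | zero => intro _; rfl
    | succ i ih =>
      intro hi
      rw [pow_succ, pow_succ, ← vecMul_vecMul, ← vecMul_vecMul, ih (by omega), hA,
        vecMul_add, ← vecMul_vecMul, hFN i (by omega), zero_vecMul, add_zero]
  have hMsymm : Mᵀ = M := by
    rw [hM]
    ext i j
    simp only [Matrix.transpose_apply, Matrix.sum_apply, Matrix.add_apply, vecMulVec_apply]
    refine Finset.sum_congr rfl fun κ _ => ?_
    ring
  have hT0 : ∀ i j : ℕ, i ≤ k - 1 ∨ j ≤ k - 1 →
      ξ ⬝ᵥ (A ^ i * M * (Aᵀ) ^ j).mulVec ξ = 0 := by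
    intro i j hij
    rw [show (Aᵀ) ^ j = (A ^ j)ᵀ from (transpose_pow A j).symm, QFTaux.quad_form_eq]
    rcases hij with hi | hj
    · rw [hAF i (by omega), dotProduct_mulVec, hFM i hi, zero_dotProduct]
    · rw [hAF j (by omega)]
      have hz : M.mulVec (vecMul ξ (F ^ j)) = 0 := by
        rw [← hMsymm, mulVec_transpose, hFM j hj]
      rw [hz, dotProduct_zero]
  constructor
  · intro j hj
    match j, hj with
    | 0, _ =>
      rw [iteratedDeriv_zero, hfi 0, intervalIntegral.integral_same]
    | (p+1), hj =>
      rw [hiter p]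
      refine Finset.sum_eq_zero fun i hi => ?_
      have hi' := Finset.mem_range.1 hi
      rw [hT0 i (p - i) (by omega), smul_zero]
  · rw [hiter (2 * k)]
    rw [Finset.sum_eq_single k]
    · rw [show 2 * k - k = k from by omega]
      have hAk : ξ ⬝ᵥ (A ^ k * M * (Aᵀ) ^ k).mulVec ξ
          = ξ ⬝ᵥ (F ^ k * M * (Fᵀ) ^ k).mulVec ξ := by
        rw [show (Aᵀ) ^ k = (A ^ k)ᵀ from (transpose_pow A k).symm,
          show (Fᵀ) ^ k = (F ^ k)ᵀ from (transpose_pow F k).symm,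
          QFTaux.quad_form_eq, QFTaux.quad_form_eq, hAF k le_rfl]
      rw [hAk, nsmul_eq_mul]
    · intro i hi hne
      have hi' := Finset.mem_range.1 hi
      rw [hT0 i (2 * k - i) (by omega), smul_zero]
    · intro h
      exact absurd (Finset.mem_range.2 (by omega)) h
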